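/- Let G be a finite group, σ an anti-automorphism of G, and S ⊆ G such that σ²(g)·σ(s⁻¹)·g⁻¹ ∈ S for every s ∈ S and g ∈ G (equivalently, the twisted Cayley graph C(G,S)^σ is undirected). Define 𝒩(A) = {σ(as) : a ∈ A, s ∈ S} for A ⊆ G. Then for every A ⊆ G and every g ∈ G, 𝒩(𝒩(gA)) = g·𝒩(𝒩(A)), where gA = {ga : a ∈ A}. -/

import Mathlib

/-- Let `G` be a finite group, `σ` an anti-automorphism of `G` (a bijection with
`σ(xy) = σ(y)σ(x)`), and `S ⊆ G` such that `σ²(g)·σ(s⁻¹)·g⁻¹ ∈ S` for every `s ∈ S`, `g ∈ G`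
(equivalently, the twisted Cayley graph `C(G,S)^σ` is undirected). With
`𝒩(A) = {σ(as) : a ∈ A, s ∈ S}`, for every `A ⊆ G` and `g ∈ G`,
`𝒩(𝒩(gA)) = g·𝒩(𝒩(A))`. -/
theorem stmt_18 {G : Type*} [Group G] [Fintype G]
    (σ : G → G)
    (hbij : Function.Bijective σ)
    (hanti : ∀ x y : G, σ (x * y) = σ y * σ x)
    (S : Set G)
    (hS : ∀ s ∈ S, ∀ g : G, σ (σ g) * σ s⁻¹ * g⁻¹ ∈ S)
    (N : Set G → Set G)
    (hN : ∀ A : Set G, N A = {y : G | ∃ a ∈ A, ∃ s ∈ S, y = σ (a * s)})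
    (A : Set G) (g : G) :
    N (N ((g * ·) '' A)) = (g * ·) '' N (N A) := by
  -- σ 1 = 1
  have hone : σ 1 = 1 := by
    have h1 : σ (1 * 1) = σ 1 * σ 1 := hanti 1 1
    rw [one_mul] at h1
    exact right_eq_mul.mp h1
  -- σ x⁻¹ = (σ x)⁻¹
  have hinv : ∀ x : G, σ x⁻¹ = (σ x)⁻¹ := by
    intro x
    refine eq_inv_of_mul_eq_one_left ?_
    rw [← hanti, mul_inv_cancel, hone]
  -- S is closed under s ↦ (σ s)⁻¹
  have hSinv : ∀ s ∈ S, (σ s)⁻¹ ∈ S := by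
    intro s hs
    have := hS s hs 1
    simpa [hone, hinv] using this
  -- key lemma: for t ∈ S and g, there exists s ∈ S with σ s = g⁻¹ * σ t * σ (σ g)
  have key : ∀ t ∈ S, ∀ g : G, ∃ s ∈ S, σ s = g⁻¹ * σ t * σ (σ g) := by
    intro t ht g
    set f : G → G := fun s => σ (σ g) * σ s⁻¹ * g⁻¹ with hf
    have hmaps : Set.MapsTo f S S := fun s hs => hS s hs g
    have hinj : Set.InjOn f S := by
      intro a _ b _ hab
      simp only [hf] at hab
      have h2 : σ a⁻¹ = σ b⁻¹ := by
        have := mul_right_cancel hab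
        exact mul_left_cancel this
      exact inv_injective (hbij.injective h2)
    have hsurj : Set.SurjOn f S S :=
      (((Set.toFinite S).injOn_iff_bijOn_of_mapsTo hmaps).mp hinj).surjOn
    obtain ⟨s, hsS, hfs⟩ := hsurj (hSinv t ht)
    refine ⟨s, hsS, ?_⟩
    simp only [hf, hinv] at hfs
    -- hfs : σ (σ g) * (σ s)⁻¹ * g⁻¹ = (σ t)⁻¹
    have : (σ s)⁻¹ = (σ (σ g))⁻¹ * (σ t)⁻¹ * g := by
      rw [← hfs]; group
    rw [← inv_inv (σ s), this]; group
  -- now the main computation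
  ext z
  simp only [hN, Set.mem_setOf_eq, Set.mem_image]
  constructor
  · rintro ⟨x, ⟨b, ⟨a, haA, rfl⟩, s, hsS, rfl⟩, t, htS, rfl⟩
    obtain ⟨t', ht'S, ht'⟩ := key t htS g
    refine ⟨σ (σ (a * s) * t'), ⟨σ (a * s), ⟨a, haA, s, hsS, rfl⟩, t', ht'S, rfl⟩, ?_⟩
    simp only [hanti, ht']
    group
  · rintro ⟨x, ⟨y, ⟨a, haA, s, hsS, rfl⟩, t', ht'S, rfl⟩, rfl⟩
    obtain ⟨t, htS, ht⟩ := key t' ht'S g⁻¹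
    refine ⟨σ (g * a * s), ⟨g * a, ⟨a, haA, rfl⟩, s, hsS, rfl⟩, t, htS, ?_⟩
    have h3 : σ (σ g⁻¹) = (σ (σ g))⁻¹ := by rw [hinv, hinv]
    rw [inv_inv, h3] at ht
    simp only [hanti]
    rw [ht]
    group
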